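/- Let E be a Hausdorff locally convex topological real vector space, let K ⊆ E be a nonempty compact convex set, let x ∈ K, and let U be an open neighborhood of x. Then there exist a natural number n ≥ 1 and extreme points x₁, …, xₙ of K such that the average (x₁ + ⋯ + xₙ)/n lies in U. -/

import Mathlib

open Filter Topology

private lemma multiset_to_fin {E : Type*} [AddCommMonoid E] {P : Set E} :
    ∀ (s : Multiset E) (n : ℕ), s.card = n → (∀ y ∈ s, y ∈ P) →
      ∃ f : Fin n → E, (∀ i, f i ∈ P) ∧ ∑ i, f i = s.sum := by
  intro s
  induction s using Multiset.induction_on with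
  | empty => rintro n rfl _; exact ⟨Fin.elim0, fun i => i.elim0, by rw [Multiset.sum_zero]; exact Fin.sum_univ_zero _⟩
  | cons a s ih =>
    intro n hn hmem
    rw [Multiset.card_cons] at hn
    subst hn
    obtain ⟨f, hf, hsum⟩ := ih s.card rfl (fun y hy => hmem y (Multiset.mem_cons_of_mem hy))
    refine ⟨Fin.cons a f, ?_, ?_⟩
    · intro i
      refine Fin.cases ?_ ?_ i
      · exact hmem a (Multiset.mem_cons_self a s)
      · exact fun j => hf j
    · rw [Fin.sum_cons, hsum, Multiset.sum_cons]
private lemma card_finset_sum {ι E : Type*} (t : Finset ι) (g : ι → Multiset E) :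
    Multiset.card (∑ i ∈ t, g i) = ∑ i ∈ t, (g i).card := by
  classical
  induction t using Finset.induction_on with
  | empty => simp
  | insert a s h ih => simp [Finset.sum_insert h, ih]

private lemma sum_finset_sum {ι E : Type*} [AddCommMonoid E] (t : Finset ι)
    (g : ι → Multiset E) : (∑ i ∈ t, g i).sum = ∑ i ∈ t, (g i).sum := by
  classical
  induction t using Finset.induction_on with
  | empty => simp
  | insert a s h ih => simp [Finset.sum_insert h, ih]

/-- Krein–Milman consequence: any point of a nonempty compact convex set `K` in a
Hausdorff locally convex real TVS can be approximated by averages of extreme points: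
every open neighborhood of `x ∈ K` contains an average `(x₁ + ⋯ + xₙ)/n` of
extreme points of `K`. -/
theorem average_of_extremePoints_mem_nhd
    {E : Type*} [AddCommGroup E] [Module ℝ E] [TopologicalSpace E]
    [IsTopologicalAddGroup E] [ContinuousSMul ℝ E] [LocallyConvexSpace ℝ E] [T2Space E]
    {K : Set E} (hKne : K.Nonempty) (hKcomp : IsCompact K) (hKconv : Convex ℝ K)
    {x : E} (hx : x ∈ K) {U : Set E} (hU : IsOpen U) (hxU : x ∈ U) :
    ∃ (n : ℕ), 1 ≤ n ∧ ∃ f : Fin n → E,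
      (∀ i, f i ∈ K.extremePoints ℝ) ∧ ((n : ℝ)⁻¹ • ∑ i, f i) ∈ U := by
  classical
  have hKM := closure_convexHull_extremePoints hKcomp hKconv
  have hxcl : x ∈ closure (convexHull ℝ (K.extremePoints ℝ)) := by rw [hKM]; exact hx
  obtain ⟨y, hyU, hy⟩ := mem_closure_iff.1 hxcl U hU hxU
  rw [convexHull_eq] at hy
  obtain ⟨ι, t, w, z, hw0, hw1, hzS, hcm⟩ := hy
  rw [Finset.centerMass_eq_of_sum_1 _ _ hw1] at hcm
  have htne : t.Nonempty := by
    rcases t.eq_empty_or_nonempty with rfl | h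
    · simp at hw1
    · exact h
  obtain ⟨i₀, hi₀⟩ := htne
  set S : ℕ → ℕ := fun N => ∑ j ∈ t.erase i₀, ⌊w j * (N : ℝ)⌋₊ with hS
  have hwe : ∑ j ∈ t.erase i₀, w j = 1 - w i₀ := by
    rw [← hw1, ← Finset.add_sum_erase t w hi₀]; ring
  have hSle : ∀ N : ℕ, S N ≤ N := by
    intro N
    have : (S N : ℝ) ≤ N := by
      rw [hS, Nat.cast_sum]
      calc ∑ j ∈ t.erase i₀, (⌊w j * (N : ℝ)⌋₊ : ℝ)
          ≤ ∑ j ∈ t.erase i₀, w j * (N : ℝ) := by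
            refine Finset.sum_le_sum fun j hj => ?_
            exact Nat.floor_le (mul_nonneg (hw0 j (Finset.mem_of_mem_erase hj)) (Nat.cast_nonneg N))
        _ = (1 - w i₀) * N := by rw [← hwe, Finset.sum_mul]
        _ ≤ N := by nlinarith [hw0 i₀ hi₀, Nat.cast_nonneg (α := ℝ) N]
    exact_mod_cast this
  set a : ℕ → ι → ℕ := fun N i => if i = i₀ then N - S N else ⌊w i * (N : ℝ)⌋₊ with ha
  have hasum : ∀ N, ∑ i ∈ t, a N i = N := by
    intro N
    rw [← Finset.add_sum_erase t _ hi₀]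
    have : ∑ j ∈ t.erase i₀, a N j = S N := by
      refine Finset.sum_congr rfl fun j hj => ?_
      rw [ha]; simp [Finset.ne_of_mem_erase hj]
    rw [this, ha]
    simp [Nat.sub_add_cancel (hSle N)]
  -- the rational approximations converge
  have hv : ∀ i ∈ t, Tendsto (fun N : ℕ => (a N i : ℝ) / N) atTop (𝓝 (w i)) := by
    intro i hi
    rcases eq_or_ne i i₀ with rfl | hne
    · have h1 : Tendsto (fun N : ℕ => 1 - (S N : ℝ) / N) atTop (𝓝 (w i)) := by
        have : ∀ j ∈ t.erase i, Tendsto (fun N : ℕ => (⌊w j * (N : ℝ)⌋₊ : ℝ) / N) atTop (𝓝 (w j)) :=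
          fun j hj => (tendsto_nat_floor_mul_div_atTop
            (hw0 j (Finset.mem_of_mem_erase hj))).comp tendsto_natCast_atTop_atTop
        have hsum := tendsto_finset_sum (t.erase i) this
        rw [hwe] at hsum
        have := (tendsto_const_nhds (x := (1:ℝ)) (f := atTop)).sub hsum
        simp only [sub_sub_cancel] at this
        convert this using 2 with N
        rw [hS, Nat.cast_sum, Finset.sum_div]
      refine h1.congr' ?_
      filter_upwards [eventually_ge_atTop 1] with N hN
      have hN0 : (N : ℝ) ≠ 0 := Nat.cast_ne_zero.2 (by omega)
      have haN : a N i = N - S N := by simp [ha]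
      rw [haN, Nat.cast_sub (hSle N), sub_div, div_self hN0]
    · have : Tendsto (fun N : ℕ => (⌊w i * (N : ℝ)⌋₊ : ℝ) / N) atTop (𝓝 (w i)) :=
        (tendsto_nat_floor_mul_div_atTop (hw0 i hi)).comp tendsto_natCast_atTop_atTop
      convert this using 2 with N
      rw [ha]; simp [hne]
  have hφ : Tendsto (fun N : ℕ => ∑ i ∈ t, ((a N i : ℝ) / N) • z i) atTop (𝓝 y) := by
    rw [← hcm]
    exact tendsto_finset_sum t fun i hi => (hv i hi).smul_const (z i)
  have hev : ∀ᶠ N : ℕ in atTop, (∑ i ∈ t, ((a N i : ℝ) / N) • z i) ∈ U ∧ 1 ≤ N :=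
    (hφ.eventually (hU.mem_nhds hyU)).and (eventually_ge_atTop 1)
  obtain ⟨N, hNU, hN1⟩ := hev.exists
  -- build the multiset of extreme points
  set M : Multiset E := ∑ i ∈ t, Multiset.replicate (a N i) (z i) with hM
  have hMcard : M.card = N := by
    rw [hM, card_finset_sum]
    simp [hasum N]
  have hMmem : ∀ p ∈ M, p ∈ K.extremePoints ℝ := by
    intro p hp
    rw [hM, Multiset.mem_sum] at hp
    obtain ⟨i, hi, hpi⟩ := hp
    rw [Multiset.eq_of_mem_replicate hpi]
    exact hzS i hi
  have hMsum : M.sum = ∑ i ∈ t, a N i • z i := by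
    rw [hM, sum_finset_sum]
    exact Finset.sum_congr rfl fun i _ => Multiset.sum_replicate _ _
  obtain ⟨f, hf, hfsum⟩ := multiset_to_fin M N hMcard hMmem
  refine ⟨N, hN1, f, hf, ?_⟩
  rw [hfsum, hMsum]
  have : (N : ℝ)⁻¹ • ∑ i ∈ t, a N i • z i = ∑ i ∈ t, ((a N i : ℝ) / N) • z i := by
    rw [Finset.smul_sum]
    refine Finset.sum_congr rfl fun i _ => ?_
    rw [← Nat.cast_smul_eq_nsmul ℝ, ← smul_assoc, smul_eq_mul, div_eq_inv_mul]
  rw [this]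
  exact hNU
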